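/- Let 2 ≤ p < ∞, let r > 0, let d = (d_j) be a nonnegative sequence in ℓ^r, and let B : ℓ^p → ℓ^p be a bounded linear operator with nonnegative matrix entries b_{j,k} := (B e_k)_j. Set a_{j,k} := d_j · b_{j,k}. Then ( ∑_j ( ∑_k a_{j,k}² )^{r/2} )^{1/r} ≤ ‖d‖_r · ‖B‖, where ‖B‖ is the operator norm of B on ℓ^p. -/

import Mathlib

private lemma add_rpow_le_real {a b q : ℝ} (ha : 0 ≤ a) (hb : 0 ≤ b) (hq : 1 ≤ q) :
    a ^ q + b ^ q ≤ (a + b) ^ q := by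
  have h := NNReal.coe_le_coe.2 (NNReal.add_rpow_le_rpow_add a.toNNReal b.toNNReal hq)
  simpa [NNReal.coe_rpow, Real.coe_toNNReal _ ha, Real.coe_toNNReal _ hb,
    Real.toNNReal_add ha hb, Real.coe_toNNReal _ (add_nonneg ha hb)] using h

private lemma sum_rpow_le_rpow_sum_real {ι : Type*} (F : Finset ι) (f : ι → ℝ)
    (hf : ∀ i, 0 ≤ f i) {q : ℝ} (hq : 1 ≤ q) :
    ∑ i ∈ F, f i ^ q ≤ (∑ i ∈ F, f i) ^ q := by
  induction F using Finset.cons_induction with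
  | empty => simp [Real.zero_rpow (by positivity : q ≠ 0)]
  | cons i F hi ih =>
    rw [Finset.sum_cons, Finset.sum_cons]
    have h1 : f i ^ q + ∑ j ∈ F, f j ^ q ≤ f i ^ q + (∑ j ∈ F, f j) ^ q := by linarith
    refine h1.trans (add_rpow_le_real (hf i) (Finset.sum_nonneg fun j _ => hf j) hq)

/-- **Key estimate for the row inequality.** Let `2 ≤ p < ∞`, `r > 0`, let `d ∈ ℓ^r` be a
nonnegative sequence and let `B : ℓ^p → ℓ^p` be a bounded operator with nonnegative matrix
entries `b j k = (B e_k) j`. With `a j k := d j * b j k`, one has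
`(∑_j (∑_k (a j k)²)^(r/2))^(1/r) ≤ ‖d‖_r * ‖B‖`. -/
theorem row_estimate_diag_factor (p r : ℝ) (hp2 : 2 ≤ p)
    [Fact (1 ≤ ENNReal.ofReal p)] (hr : 0 < r)
    (d : ℕ → ℝ) (hd0 : ∀ j, 0 ≤ d j) (hd : Memℓp d (ENNReal.ofReal r))
    (B : lp (fun _ : ℕ => ℂ) (ENNReal.ofReal p) →L[ℂ] lp (fun _ : ℕ => ℂ) (ENNReal.ofReal p))
    (b : ℕ → ℕ → ℝ) (hb0 : ∀ j k, 0 ≤ b j k)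
    (hBb : ∀ j k : ℕ, B (lp.single (ENNReal.ofReal p) k 1) j = (b j k : ℂ)) :
    (∑' j : ℕ, (∑' k : ℕ, (d j * b j k) ^ (2 : ℝ)) ^ (r / 2)) ^ (1 / r)
      ≤ (∑' j : ℕ, d j ^ r) ^ (1 / r) * ‖B‖ := by
  set E := ENNReal.ofReal p with hE
  have hp0 : (0 : ℝ) < p := lt_of_lt_of_le two_pos hp2
  have hEt : E.toReal = p := ENNReal.toReal_ofReal hp0.le
  have hE0 : 0 < E.toReal := by rw [hEt]; exact hp0
  have hEne : E ≠ 0 := by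
    simp [hE, ENNReal.ofReal_eq_zero, not_le, hp0]
  -- Key row bound over finite sets
  have key : ∀ j, ∀ F : Finset ℕ, ∑ k ∈ F, (b j k) ^ 2 ≤ ‖B‖ ^ 2 := by
    intro j F
    set S := ∑ k ∈ F, (b j k) ^ 2 with hS
    have hS0 : 0 ≤ S := Finset.sum_nonneg fun k _ => sq_nonneg _
    rcases eq_or_lt_of_le hS0 with h0 | hSpos
    · rw [← h0]; positivity
    set x : lp (fun _ : ℕ => ℂ) E := ∑ k ∈ F, lp.single E k ((b j k : ℂ)) with hx
    -- norm of x
    have hxnorm : ‖x‖ ^ p = ∑ k ∈ F, (b j k) ^ p := by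
      have h := lp.norm_sum_single hE0 (fun k => ((b j k : ℂ))) F
      rw [hEt] at h
      rw [hx, h]
      refine Finset.sum_congr rfl fun k _ => ?_
      rw [Complex.norm_real, Real.norm_eq_abs, abs_of_nonneg (hb0 j k)]
    have hxle : ‖x‖ ≤ S ^ (1/2 : ℝ) := by
      have h1 : ∑ k ∈ F, (b j k) ^ p ≤ S ^ (p/2 : ℝ) := by
        have h2 : ∀ k, (b j k) ^ p = ((b j k) ^ 2) ^ (p/2 : ℝ) := by
          intro k
          rw [← Real.rpow_natCast (b j k) 2, ← Real.rpow_mul (hb0 j k)]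
          congr 1
          push_cast
          ring
        calc ∑ k ∈ F, (b j k) ^ p = ∑ k ∈ F, ((b j k) ^ 2) ^ (p/2 : ℝ) := by
              exact Finset.sum_congr rfl fun k _ => h2 k
          _ ≤ (∑ k ∈ F, (b j k) ^ 2) ^ (p/2 : ℝ) :=
              sum_rpow_le_rpow_sum_real F _ (fun k => sq_nonneg _) (by linarith)
      have h3 : ‖x‖ ^ p ≤ (S ^ (1/2 : ℝ)) ^ p := by
        rw [hxnorm, ← Real.rpow_mul hS0]
        calc ∑ k ∈ F, (b j k) ^ p ≤ S ^ (p/2 : ℝ) := h1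
          _ = S ^ (1/2 * p) := by ring_nf
      exact (Real.rpow_le_rpow_iff (norm_nonneg _) (Real.rpow_nonneg hS0 _) hp0).1 h3
    -- value of (B x) j
    have hBxj : (B x) j = (S : ℂ) := by
      have hsm : ∀ k : ℕ, lp.single E k ((b j k : ℂ)) = (b j k : ℂ) • lp.single (E := fun _ : ℕ => ℂ) E k (1 : ℂ) := by
        intro k
        have h := lp.single_smul (E := fun _ : ℕ => ℂ) (𝕜 := ℂ) E k ((b j k : ℂ)) (1 : ℂ)
        rw [smul_eq_mul, mul_one] at h
        exact h
      have : B x = ∑ k ∈ F, (b j k : ℂ) • B (lp.single (E := fun _ : ℕ => ℂ) E k (1 : ℂ)) := by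
        rw [hx]
        simp_rw [hsm]
        rw [map_sum]
        simp_rw [map_smul]
      rw [this, lp.coeFn_sum, Finset.sum_apply, hS]
      push_cast
      refine Finset.sum_congr rfl fun k _ => ?_
      rw [lp.coeFn_smul, Pi.smul_apply, hBb j k, smul_eq_mul]
      ring
    have hSle : S ≤ ‖B‖ * S ^ (1/2 : ℝ) := by
      have h1 : ‖(B x) j‖ ≤ ‖B x‖ := lp.norm_apply_le_norm hEne (B x) j
      have h2 : ‖B x‖ ≤ ‖B‖ * ‖x‖ := B.le_opNorm x
      have h3 : ‖(B x) j‖ = S := by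
        rw [hBxj, Complex.norm_real, Real.norm_eq_abs, abs_of_nonneg hS0]
      have h4 : ‖B‖ * ‖x‖ ≤ ‖B‖ * S ^ (1/2 : ℝ) :=
        mul_le_mul_of_nonneg_left hxle (norm_nonneg _)
      linarith
    -- conclude S ≤ ‖B‖²
    have hhalf : (0:ℝ) < S ^ (1/2 : ℝ) := Real.rpow_pos_of_pos hSpos _
    have hSsq : S ^ (1/2 : ℝ) * S ^ (1/2 : ℝ) = S := by
      rw [← Real.rpow_add hSpos]; norm_num
    have h5 : S ^ (1/2 : ℝ) ≤ ‖B‖ := by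
      by_contra h
      push_neg at h
      have : ‖B‖ * S ^ (1/2 : ℝ) < S ^ (1/2 : ℝ) * S ^ (1/2 : ℝ) :=
        mul_lt_mul_of_pos_right h hhalf
      rw [hSsq] at this
      linarith
    calc S = S ^ (1/2 : ℝ) * S ^ (1/2 : ℝ) := hSsq.symm
      _ ≤ ‖B‖ * ‖B‖ := mul_le_mul h5 h5 hhalf.le (norm_nonneg _)
      _ = ‖B‖ ^ 2 := (sq ‖B‖).symm
  -- summability and tsum bound for each row
  have hsumb : ∀ j, Summable (fun k => (b j k) ^ 2) := fun j =>
    summable_of_sum_le (fun k => sq_nonneg _) (key j)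
  have hrow : ∀ j, ∑' k, (b j k) ^ 2 ≤ ‖B‖ ^ 2 := fun j =>
    Summable.tsum_le_of_sum_le (hsumb j) (key j)
  -- rewrite inner tsum
  have hinner : ∀ j, ∑' k, (d j * b j k) ^ (2 : ℝ) = d j ^ 2 * ∑' k, (b j k) ^ 2 := by
    intro j
    rw [← tsum_mul_left]
    refine tsum_congr fun k => ?_
    rw [Real.rpow_two]
    ring
  -- summability of d^r
  have hdr : Summable (fun j => d j ^ r) := by
    have h := (memℓp_gen_iff (by rw [ENNReal.toReal_ofReal hr.le]; exact hr)).1 hd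
    rw [ENNReal.toReal_ofReal hr.le] at h
    refine h.congr fun j => ?_
    rw [Real.norm_eq_abs, abs_of_nonneg (hd0 j)]
  -- termwise bound
  have hterm : ∀ j, (∑' k, (d j * b j k) ^ (2 : ℝ)) ^ (r/2 : ℝ) ≤ d j ^ r * ‖B‖ ^ r := by
    intro j
    rw [hinner j]
    have h1 : d j ^ 2 * ∑' k, (b j k) ^ 2 ≤ (d j * ‖B‖) ^ 2 := by
      rw [mul_pow]
      exact mul_le_mul_of_nonneg_left (hrow j) (sq_nonneg _)
    have h2 : (d j ^ 2 * ∑' k, (b j k) ^ 2) ^ (r/2 : ℝ) ≤ ((d j * ‖B‖) ^ 2) ^ (r/2 : ℝ) := by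
      refine Real.rpow_le_rpow ?_ h1 (by positivity)
      exact mul_nonneg (sq_nonneg _) (tsum_nonneg fun k => sq_nonneg _)
    refine h2.trans_eq ?_
    have hdB : 0 ≤ d j * ‖B‖ := mul_nonneg (hd0 j) (norm_nonneg _)
    rw [← Real.rpow_natCast (d j * ‖B‖) 2, ← Real.rpow_mul hdB]
    have : ((2:ℕ):ℝ) * (r/2) = r := by push_cast; ring
    rw [this, Real.mul_rpow (hd0 j) (norm_nonneg _)]
  -- summability of LHS terms and majorant
  have hmaj : Summable (fun j => d j ^ r * ‖B‖ ^ r) := hdr.mul_right _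
  have hlhs : Summable (fun j => (∑' k, (d j * b j k) ^ (2 : ℝ)) ^ (r/2 : ℝ)) := by
    refine Summable.of_nonneg_of_le (fun j => ?_) hterm hmaj
    exact Real.rpow_nonneg (tsum_nonneg fun k => Real.rpow_nonneg
      (mul_nonneg (hd0 j) (hb0 j k)) _) _
  have hsum : ∑' j, (∑' k, (d j * b j k) ^ (2 : ℝ)) ^ (r/2 : ℝ)
      ≤ (∑' j, d j ^ r) * ‖B‖ ^ r := by
    rw [← tsum_mul_right]
    exact Summable.tsum_le_tsum hterm hlhs hmaj
  -- final step
  have hfin := Real.rpow_le_rpow (tsum_nonneg fun j => Real.rpow_nonneg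
      (tsum_nonneg fun k => Real.rpow_nonneg (mul_nonneg (hd0 j) (hb0 j k)) _) _)
      hsum (by positivity : (0:ℝ) ≤ 1/r)
  refine hfin.trans_eq ?_
  have hdsum : 0 ≤ ∑' j, d j ^ r := tsum_nonneg fun j => Real.rpow_nonneg (hd0 j) _
  rw [Real.mul_rpow hdsum (Real.rpow_nonneg (norm_nonneg _) _),
    ← Real.rpow_mul (norm_nonneg _), mul_one_div_cancel hr.ne', Real.rpow_one]
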